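/- Almost surely, the limit lim_{N→∞} (2/(2N+1)) · Σ_{n=-N}^{N} (−1)^n · w_n · w_{n+1} exists and equals −1. (This limit defines the value of the eigenfunction ψ of the shift, for the eigenvalue −1 of the dynamical spectrum, on the even-placement component of the DMS.) -/

import Mathlib

open MeasureTheory ProbabilityTheory Filter
open scoped ENNReal

lemma dms_law {Ω : Type*} [MeasurableSpace Ω] (P : Measure Ω) [IsProbabilityMeasure P]
    (f : Ω → ℝ) (hf : Measurable f)
    (h1 : P {ω | f ω = 1} = 1/2) (h2 : P {ω | f ω = -1} = 1/2) :
    Measure.map f P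
      = (1/2 : ℝ≥0∞) • Measure.dirac (1:ℝ) + (1/2 : ℝ≥0∞) • Measure.dirac (-1:ℝ) := by
  classical
  have hA : MeasurableSet {ω | f ω = 1} := hf (measurableSet_singleton 1)
  have hB : MeasurableSet {ω | f ω = -1} := hf (measurableSet_singleton (-1))
  set A := {ω | f ω = 1} with hAdef
  set B := {ω | f ω = -1} with hBdef
  have hdisj : Disjoint A B := by
    rw [Set.disjoint_left]
    intro ω h₁ h₂
    simp only [hAdef, hBdef, Set.mem_setOf_eq] at h₁ h₂
    norm_num [h₁] at h₂
  have hU : P (A ∪ B) = 1 := by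
    rw [measure_union hdisj hB, h1, h2]
    rw [← ENNReal.add_halves 1]
    norm_num
  have hcompl : P ((A ∪ B)ᶜ) = 0 := by
    rw [measure_compl (hA.union hB) (measure_ne_top P _), hU, measure_univ, tsub_self]
  ext s hs
  rw [Measure.map_apply hf hs]
  have key : P (f ⁻¹' s) = P (f ⁻¹' s ∩ A) + P (f ⁻¹' s ∩ B) := by
    have h0 : P (f ⁻¹' s \ (A ∪ B)) = 0 :=
      measure_mono_null (Set.diff_subset_compl _ _) hcompl
    have h3 := measure_inter_add_diff (μ := P) (f ⁻¹' s) (hA.union hB)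
    rw [h0, add_zero] at h3
    rw [← h3, Set.inter_union_distrib_left]
    exact measure_union ((hdisj.mono Set.inter_subset_right Set.inter_subset_right))
      (hs.preimage hf |>.inter hB) |>.symm ▸ rfl
  have hsA : f ⁻¹' s ∩ A = if (1:ℝ) ∈ s then A else ∅ := by
    split_ifs with h
    · ext ω
      simp only [Set.mem_inter_iff, Set.mem_preimage, hAdef, Set.mem_setOf_eq]
      exact ⟨fun h' => h'.2, fun h' => ⟨by rw [h']; exact h, h'⟩⟩
    · ext ω
      simp only [Set.mem_inter_iff, Set.mem_preimage, hAdef, Set.mem_setOf_eq, Set.mem_empty_iff_false, iff_false]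
      rintro ⟨h', h''⟩
      rw [h''] at h'
      exact h h'
  have hsB : f ⁻¹' s ∩ B = if (-1:ℝ) ∈ s then B else ∅ := by
    split_ifs with h
    · ext ω
      simp only [Set.mem_inter_iff, Set.mem_preimage, hBdef, Set.mem_setOf_eq]
      exact ⟨fun h' => h'.2, fun h' => ⟨by rw [h']; exact h, h'⟩⟩
    · ext ω
      simp only [Set.mem_inter_iff, Set.mem_preimage, hBdef, Set.mem_setOf_eq, Set.mem_empty_iff_false, iff_false]
      rintro ⟨h', h''⟩
      rw [h''] at h'
      exact h h'
  rw [key, hsA, hsB]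
  simp only [Measure.add_apply, Measure.smul_apply, Measure.dirac_apply' _ hs, smul_eq_mul]
  rw [Set.indicator_apply, Set.indicator_apply]
  split_ifs <;> simp [h1, h2]

lemma dms_ae_pm {Ω : Type*} [MeasurableSpace Ω] (P : Measure Ω) [IsProbabilityMeasure P]
    (f : Ω → ℝ) (hf : Measurable f)
    (h1 : P {ω | f ω = 1} = 1/2) (h2 : P {ω | f ω = -1} = 1/2) :
    ∀ᵐ ω ∂P, f ω = 1 ∨ f ω = -1 := by
  have hA : MeasurableSet {ω | f ω = 1} := hf (measurableSet_singleton 1)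
  have hB : MeasurableSet {ω | f ω = -1} := hf (measurableSet_singleton (-1))
  have hdisj : Disjoint {ω | f ω = 1} {ω | f ω = -1} := by
    rw [Set.disjoint_left]
    intro ω h₁ h₂
    simp only [Set.mem_setOf_eq] at h₁ h₂
    norm_num [h₁] at h₂
  have hU : P ({ω | f ω = 1} ∪ {ω | f ω = -1}) = 1 := by
    rw [measure_union hdisj hB, h1, h2, ← ENNReal.add_halves 1]
    norm_num
  rw [ae_iff]
  have : {ω | ¬(f ω = 1 ∨ f ω = -1)} = ({ω | f ω = 1} ∪ {ω | f ω = -1})ᶜ := by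
    ext ω; simp [not_or]
  rw [this, measure_compl (hA.union hB) (measure_ne_top P _), hU, measure_univ, tsub_self]

lemma dms_integrable {Ω : Type*} [MeasurableSpace Ω] (P : Measure Ω) [IsProbabilityMeasure P]
    (f : Ω → ℝ) (hf : Measurable f) (hpm : ∀ᵐ ω ∂P, f ω = 1 ∨ f ω = -1) :
    Integrable f P := by
  refine Integrable.mono' (integrable_const (1:ℝ)) hf.aestronglyMeasurable ?_
  filter_upwards [hpm] with ω hω
  rcases hω with h | h <;> rw [h] <;> norm_num

lemma dms_integral_zero {Ω : Type*} [MeasurableSpace Ω] (P : Measure Ω) [IsProbabilityMeasure P]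
    (f : Ω → ℝ) (hf : Measurable f)
    (h1 : P {ω | f ω = 1} = 1/2) (h2 : P {ω | f ω = -1} = 1/2) :
    ∫ ω, f ω ∂P = 0 := by
  have hA : MeasurableSet {ω | f ω = 1} := hf (measurableSet_singleton 1)
  have hB : MeasurableSet {ω | f ω = -1} := hf (measurableSet_singleton (-1))
  have hpm := dms_ae_pm P f hf h1 h2
  have hrep : f =ᵐ[P] fun ω => ({ω | f ω = 1}).indicator (fun _ => (1:ℝ)) ω
      + ({ω | f ω = -1}).indicator (fun _ => (-1:ℝ)) ω := by
    filter_upwards [hpm] with ω hω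
    rcases hω with h | h
    · have h' : f ω ≠ -1 := by rw [h]; norm_num
      simp [Set.indicator_apply, Set.mem_setOf_eq, h, h']
      norm_num
    · have h' : f ω ≠ 1 := by rw [h]; norm_num
      simp [Set.indicator_apply, Set.mem_setOf_eq, h, h']
      norm_num
  rw [integral_congr_ae hrep]
  rw [integral_add (((integrable_const (1:ℝ))).indicator hA)
    (((integrable_const (-1:ℝ))).indicator hB)]
  rw [integral_indicator_const _ hA, integral_indicator_const _ hB, measureReal_def, measureReal_def, h1, h2]
  norm_num [ENNReal.toReal_div]

lemma dms_eta_ident {Ω : Type*} [MeasurableSpace Ω] (P : Measure Ω) [IsProbabilityMeasure P]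
    (ε : ℤ → Ω → ℝ) (hmeas : ∀ k, Measurable (ε k))
    (hindep : iIndepFun ε P)
    (hdist : ∀ k, P {ω | ε k ω = 1} = 1/2 ∧ P {ω | ε k ω = -1} = 1/2)
    (j k : ℤ) :
    IdentDistrib (fun ω => ε j ω * ε (j+1) ω) (fun ω => ε k ω * ε (k+1) ω) P P := by
  have hpair : ∀ m : ℤ, Measure.map (fun ω => (ε m ω, ε (m+1) ω)) P
      = ((1/2 : ℝ≥0∞) • Measure.dirac (1:ℝ) + (1/2 : ℝ≥0∞) • Measure.dirac (-1:ℝ)).prod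
        ((1/2 : ℝ≥0∞) • Measure.dirac (1:ℝ) + (1/2 : ℝ≥0∞) • Measure.dirac (-1:ℝ)) := by
    intro m
    rw [(indepFun_iff_map_prod_eq_prod_map_map (hmeas m).aemeasurable
      (hmeas (m+1)).aemeasurable).1 (hindep.indepFun (by omega : m ≠ m+1))]
    rw [dms_law P (ε m) (hmeas m) (hdist m).1 (hdist m).2,
      dms_law P (ε (m+1)) (hmeas (m+1)) (hdist (m+1)).1 (hdist (m+1)).2]
  have hid : IdentDistrib (fun ω => (ε j ω, ε (j+1) ω)) (fun ω => (ε k ω, ε (k+1) ω)) P P :=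
    ⟨((hmeas j).prodMk (hmeas (j+1))).aemeasurable,
     ((hmeas k).prodMk (hmeas (k+1))).aemeasurable,
     by rw [hpair j, hpair k]⟩
  exact hid.comp (measurable_fst.mul measurable_snd)

lemma dms_slln {Ω : Type*} [MeasurableSpace Ω] (P : Measure Ω) [IsProbabilityMeasure P]
    (ε : ℤ → Ω → ℝ) (hmeas : ∀ k, Measurable (ε k))
    (hindep : iIndepFun ε P)
    (hdist : ∀ k, P {ω | ε k ω = 1} = 1/2 ∧ P {ω | ε k ω = -1} = 1/2)
    (g : ℕ → ℤ)
    (hg : ∀ i j : ℕ, i ≠ j → g i ≠ g j ∧ g i ≠ g j + 1 ∧ g i + 1 ≠ g j ∧ g i + 1 ≠ g j + 1) :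
    ∀ᵐ ω ∂P, Tendsto (fun n : ℕ => (n:ℝ)⁻¹ * ∑ i ∈ Finset.range n, ε (g i) ω * ε (g i + 1) ω)
      atTop (nhds 0) := by
  set X : ℕ → Ω → ℝ := fun i ω => ε (g i) ω * ε (g i + 1) ω with hX
  have hXmeas : ∀ i, Measurable (X i) := fun i => (hmeas _).mul (hmeas _)
  have hpm : ∀ k : ℤ, ∀ᵐ ω ∂P, ε k ω = 1 ∨ ε k ω = -1 :=
    fun k => dms_ae_pm P (ε k) (hmeas k) (hdist k).1 (hdist k).2
  have hint : Integrable (X 0) P := by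
    refine Integrable.mono' (integrable_const (1:ℝ)) (hXmeas 0).aestronglyMeasurable ?_
    filter_upwards [hpm (g 0), hpm (g 0 + 1)] with ω h₁ h₂
    rcases h₁ with h | h <;> rcases h₂ with h' | h' <;>
      simp [hX, h, h']
  have hindep' : Pairwise (Function.onFun (IndepFun · · P) X) := by
    intro i j hij
    have h := hg i j hij
    exact hindep.indepFun_mul_mul hmeas (g i) (g i + 1) (g j) (g j + 1)
      h.1 h.2.1 h.2.2.1 h.2.2.2
  have hident : ∀ i, IdentDistrib (X i) (X 0) P P := fun i =>
    dms_eta_ident P ε hmeas hindep hdist (g i) (g 0)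
  have hmean : ∫ ω, X 0 ω ∂P = 0 := by
    have h0 : IndepFun (ε (g 0)) (ε (g 0 + 1)) P := hindep.indepFun (by omega)
    have := h0.integral_mul_eq_mul_integral
      (dms_integrable P _ (hmeas _) (hpm (g 0))).aestronglyMeasurable
      (dms_integrable P _ (hmeas _) (hpm (g 0 + 1))).aestronglyMeasurable
    rw [hX]
    simp only []
    calc ∫ ω, ε (g 0) ω * ε (g 0 + 1) ω ∂P
        = ∫ ω, (ε (g 0) * ε (g 0 + 1)) ω ∂P := by rfl
      _ = (∫ ω, ε (g 0) ω ∂P) * ∫ ω, ε (g 0 + 1) ω ∂P := this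
      _ = 0 := by
          rw [dms_integral_zero P _ (hmeas _) (hdist (g 0)).1 (hdist (g 0)).2]
          ring
  have := strong_law_ae X hint hindep' hident
  filter_upwards [this] with ω hω
  rw [hmean] at hω
  simpa [smul_eq_mul] using hω

lemma dms_sum_decomp {Ω : Type*} (ε : ℤ → Ω → ℝ) (w : ℤ → Ω → ℝ)
    (hw_even : ∀ k ω, w (2*k) ω = ε k ω)
    (hw_odd : ∀ k ω, w (2*k+1) ω = - ε k ω)
    (ω : Ω) (hω : ∀ k, ε k ω = 1 ∨ ε k ω = -1) :
    ∀ N : ℕ, ∑ n ∈ Finset.Icc (-(N:ℤ)) (N:ℤ), (-1 : ℝ)^n * w n ω * w (n+1) ω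
      = -(2*((N/2 : ℕ) : ℝ) + 1)
        + (∑ i ∈ Finset.range ((N+3)/4), ε (2*(i:ℤ)) ω * ε (2*(i:ℤ) + 1) ω
          + ∑ i ∈ Finset.range ((N+3)/4), ε (-(2*(i:ℤ))-1) ω * ε (-(2*(i:ℤ))-1 + 1) ω)
        + (∑ i ∈ Finset.range ((N+1)/4), ε (2*(i:ℤ)+1) ω * ε (2*(i:ℤ)+1 + 1) ω
          + ∑ i ∈ Finset.range ((N+1)/4), ε (-(2*(i:ℤ))-2) ω * ε (-(2*(i:ℤ))-2 + 1) ω) := by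
  have heven : ∀ k : ℤ, (-1:ℝ)^(2*k) * w (2*k) ω * w (2*k+1) ω = -1 := by
    intro k
    have h1 : (-1:ℝ)^(2*k) = 1 := by
      rw [zpow_mul]
      norm_num
    rw [h1, hw_even, hw_odd]
    rcases hω k with h | h <;> rw [h] <;> norm_num
  have hodd : ∀ k : ℤ, (-1:ℝ)^(2*k+1) * w (2*k+1) ω * w (2*k+1+1) ω = ε k ω * ε (k+1) ω := by
    intro k
    have h1 : (-1:ℝ)^(2*k+1) = -1 := by
      rw [zpow_add₀ (by norm_num : (-1:ℝ) ≠ 0), zpow_mul]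
      norm_num
    rw [h1, hw_odd, show (2*k+1+1 : ℤ) = 2*(k+1) by ring, hw_even]
    ring
  intro N
  induction N with
  | zero =>
    norm_num
    have h0 := heven 0
    norm_num at h0
    rw [h0]
  | succ N IH =>
    have hIcc : Finset.Icc (-((N:ℤ)+1)) ((N:ℤ)+1)
        = insert (-((N:ℤ)+1)) (insert ((N:ℤ)+1) (Finset.Icc (-(N:ℤ)) (N:ℤ))) := by
      ext n
      simp only [Finset.mem_Icc, Finset.mem_insert]
      omega
    have hnm1 : ((N:ℤ)+1) ∉ Finset.Icc (-(N:ℤ)) (N:ℤ) := by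
      simp only [Finset.mem_Icc]; omega
    have hnm2 : (-((N:ℤ)+1)) ∉ insert ((N:ℤ)+1) (Finset.Icc (-(N:ℤ)) (N:ℤ)) := by
      simp only [Finset.mem_insert, Finset.mem_Icc]; omega
    push_cast
    rw [hIcc, Finset.sum_insert hnm2, Finset.sum_insert hnm1, IH]
    rcases Nat.even_or_odd N with hN | hN
    · -- N even, so N+1 odd
      obtain ⟨m, hm⟩ := hN
      rcases Nat.even_or_odd m with hm2 | hm2
      · -- N ≡ 0 mod 4 : N+1 = 4i+1, i = (N+3)/4 after increment
        obtain ⟨l, hl⟩ := hm2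
        set i := (N+3)/4 with hi
        have e1 : ((N:ℤ)+1) = 2*(2*(i:ℤ))+1 := by omega
        have e2 : (-((N:ℤ)+1)) = 2*(-(2*(i:ℤ))-1)+1 := by omega
        have hb : (-1:ℝ)^((N:ℤ)+1) * w ((N:ℤ)+1) ω * w ((N:ℤ)+1+1) ω
            = ε (2*(i:ℤ)) ω * ε (2*(i:ℤ)+1) ω := by
          rw [e1]; exact hodd (2*(i:ℤ))
        have hc : (-1:ℝ)^(-((N:ℤ)+1)) * w (-((N:ℤ)+1)) ω * w (-((N:ℤ)+1)+1) ω
            = ε (-(2*(i:ℤ))-1) ω * ε (-(2*(i:ℤ))-1+1) ω := by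
          rw [e2]; exact hodd (-(2*(i:ℤ))-1)
        rw [hb, hc]
        rw [show (N+1+3)/4 = (N+3)/4 + 1 by omega, show (N+1+1)/4 = (N+1)/4 by omega,
          show (N+1)/2 = N/2 by omega, Finset.sum_range_succ, Finset.sum_range_succ]
        ring
      · -- N ≡ 2 mod 4 : N+1 = 4i+3
        obtain ⟨l, hl⟩ := hm2
        set i := (N+1)/4 with hi
        have e1 : ((N:ℤ)+1) = 2*(2*(i:ℤ)+1)+1 := by omega
        have e2 : (-((N:ℤ)+1)) = 2*(-(2*(i:ℤ))-2)+1 := by omega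
        have hb : (-1:ℝ)^((N:ℤ)+1) * w ((N:ℤ)+1) ω * w ((N:ℤ)+1+1) ω
            = ε (2*(i:ℤ)+1) ω * ε (2*(i:ℤ)+1+1) ω := by
          rw [e1]; exact hodd (2*(i:ℤ)+1)
        have hc : (-1:ℝ)^(-((N:ℤ)+1)) * w (-((N:ℤ)+1)) ω * w (-((N:ℤ)+1)+1) ω
            = ε (-(2*(i:ℤ))-2) ω * ε (-(2*(i:ℤ))-2+1) ω := by
          rw [e2]; exact hodd (-(2*(i:ℤ))-2)
        rw [hb, hc]
        rw [show (N+1+3)/4 = (N+3)/4 by omega, show (N+1+1)/4 = (N+1)/4 + 1 by omega,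
          show (N+1)/2 = N/2 by omega, Finset.sum_range_succ, Finset.sum_range_succ]
        ring
    · -- N odd, N+1 even
      obtain ⟨m, hm⟩ := hN
      have e1 : ((N:ℤ)+1) = 2*((m:ℤ)+1) := by omega
      have e2 : (-((N:ℤ)+1)) = 2*(-((m:ℤ)+1)) := by omega
      have hb : (-1:ℝ)^((N:ℤ)+1) * w ((N:ℤ)+1) ω * w ((N:ℤ)+1+1) ω = -1 := by
        rw [show ((N:ℤ)+1+1) = 2*((m:ℤ)+1)+1 by omega, e1]; exact heven ((m:ℤ)+1)
      have hc : (-1:ℝ)^(-((N:ℤ)+1)) * w (-((N:ℤ)+1)) ω * w (-((N:ℤ)+1)+1) ω = -1 := by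
        rw [show (-((N:ℤ)+1)+1) = 2*(-((m:ℤ)+1))+1 by omega, e2]; exact heven (-((m:ℤ)+1))
      rw [hb, hc]
      rw [show (N+1+3)/4 = (N+3)/4 by omega, show (N+1+1)/4 = (N+1)/4 by omega,
        show (N+1)/2 = N/2 + 1 by omega]
      push_cast
      ring

lemma dms_denom_tendsto : Tendsto (fun N : ℕ => 2*(N:ℝ)+1) atTop atTop := by
  apply Filter.tendsto_atTop_add_const_right
  exact (tendsto_natCast_atTop_atTop).const_mul_atTop two_pos

lemma dms_inv_denom : Tendsto (fun N : ℕ => 1/(2*(N:ℝ)+1)) atTop (nhds 0) := by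
  simp only [one_div]; exact dms_denom_tendsto.inv_tendsto_atTop

lemma dms_vanish (T : ℕ → ℝ) (hT : Tendsto (fun n : ℕ => (n:ℝ)⁻¹ * T n) atTop (nhds 0))
    (c : ℕ → ℕ) (hc1 : Tendsto c atTop atTop) (hc2 : ∀ N, 2 * c N ≤ 2*N+1) :
    Tendsto (fun N : ℕ => 2/(2*(N:ℝ)+1) * T (c N)) atTop (nhds 0) := by
  have hcomp : Tendsto (fun N : ℕ => |((c N : ℝ))⁻¹ * T (c N)|) atTop (nhds 0) := by
    have := (hT.comp hc1).abs
    simpa using this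
  apply squeeze_zero_norm' _ hcomp
  filter_upwards [hc1.eventually_ge_atTop 1] with N hN
  have hpos : (0:ℝ) < 2*(N:ℝ)+1 := by positivity
  have hcpos : (0:ℝ) < (c N : ℝ) := by exact_mod_cast hN
  have key : 2/(2*(N:ℝ)+1) ≤ ((c N : ℝ))⁻¹ := by
    rw [inv_eq_one_div, div_le_div_iff₀ hpos hcpos]
    have := hc2 N
    have : (2 : ℝ) * (c N : ℝ) ≤ 2*(N:ℝ)+1 := by exact_mod_cast this
    linarith
  calc ‖2/(2*(N:ℝ)+1) * T (c N)‖ = 2/(2*(N:ℝ)+1) * |T (c N)| := by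
        rw [Real.norm_eq_abs, abs_mul, abs_of_pos (by positivity)]
    _ ≤ ((c N : ℝ))⁻¹ * |T (c N)| := by
        exact mul_le_mul_of_nonneg_right key (abs_nonneg _)
    _ = |((c N : ℝ))⁻¹ * T (c N)| := by
        rw [abs_mul, abs_inv, abs_of_pos hcpos]

lemma dms_det_tendsto :
    Tendsto (fun N : ℕ => 2/(2*(N:ℝ)+1) * (-(2*((N/2 : ℕ) : ℝ) + 1))) atTop (nhds (-1)) := by
  have h0 : Tendsto (fun N : ℕ =>
      ((2*(2*((N/2 : ℕ) : ℝ)+1)) - (2*(N:ℝ)+1)) / (2*(N:ℝ)+1)) atTop (nhds 0) := by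
    apply squeeze_zero_norm _ dms_inv_denom
    intro N
    have hpos : (0:ℝ) < 2*(N:ℝ)+1 := by positivity
    rw [Real.norm_eq_abs, abs_div, abs_of_pos hpos, div_le_div_iff₀ hpos hpos, one_mul]
    have h1 : 2*(N/2) ≤ N := by omega
    have h2 : N ≤ 2*(N/2)+1 := by omega
    have h1' : 2*((N/2 : ℕ):ℝ) ≤ (N:ℝ) := by exact_mod_cast h1
    have h2' : (N:ℝ) ≤ 2*((N/2 : ℕ):ℝ)+1 := by exact_mod_cast h2
    have habs : |2*(2*((N/2 : ℕ):ℝ)+1) - (2*(N:ℝ)+1)| ≤ 1 :=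
      abs_le.2 ⟨by linarith, by linarith⟩
    nlinarith [habs, hpos]
  have h1 : Tendsto (fun N : ℕ =>
      (2*(2*((N/2 : ℕ) : ℝ)+1)) / (2*(N:ℝ)+1)) atTop (nhds 1) := by
    have := h0.add (tendsto_const_nhds : Tendsto (fun _ : ℕ => (1:ℝ)) atTop (nhds 1))
    rw [zero_add] at this
    apply this.congr
    intro N
    have hpos : (2*(N:ℝ)+1) ≠ 0 := by positivity
    field_simp
    ring
  have := h1.neg
  rw [show -(1:ℝ) = (-1 : ℝ) by norm_num] at this
  apply this.congr
  intro N
  ring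

/-- For the even-placement realisation of the DMS, the eigenfunction
limit `lim_{N→∞} (2/(2N+1)) Σ_{n=-N}^{N} (-1)^n w n · w (n+1)` almost surely exists
and equals `-1`. -/
theorem dms_eigenfunction_value
    {Ω : Type*} [MeasurableSpace Ω] (P : Measure Ω) [IsProbabilityMeasure P]
    (ε : ℤ → Ω → ℝ) (hmeas : ∀ k, Measurable (ε k))
    (hindep : iIndepFun ε P)
    (hdist : ∀ k, P {ω | ε k ω = 1} = 1/2 ∧ P {ω | ε k ω = -1} = 1/2)
    (w : ℤ → Ω → ℝ)
    (hw_even : ∀ k ω, w (2*k) ω = ε k ω)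
    (hw_odd : ∀ k ω, w (2*k+1) ω = - ε k ω) :
    ∀ᵐ ω ∂P,
      Tendsto (fun N : ℕ =>
          (2 / (2*(N:ℝ)+1)) *
            ∑ n ∈ Finset.Icc (-(N:ℤ)) (N:ℤ), (-1 : ℝ)^n * w n ω * w (n+1) ω)
        atTop (nhds (-1)) := by
  have hpm : ∀ᵐ ω ∂P, ∀ k : ℤ, ε k ω = 1 ∨ ε k ω = -1 :=
    ae_all_iff.2 fun k => dms_ae_pm P (ε k) (hmeas k) (hdist k).1 (hdist k).2
  have hg1 : ∀ᵐ ω ∂P, Tendsto (fun n : ℕ =>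
      (n:ℝ)⁻¹ * ∑ i ∈ Finset.range n, ε (2*(i:ℤ)) ω * ε (2*(i:ℤ) + 1) ω) atTop (nhds 0) :=
    dms_slln P ε hmeas hindep hdist (fun i => 2*(i:ℤ))
      (by intro i j hij; refine ⟨?_, ?_, ?_, ?_⟩ <;> omega)
  have hg2 : ∀ᵐ ω ∂P, Tendsto (fun n : ℕ =>
      (n:ℝ)⁻¹ * ∑ i ∈ Finset.range n, ε (2*(i:ℤ)+1) ω * ε (2*(i:ℤ)+1 + 1) ω) atTop (nhds 0) :=
    dms_slln P ε hmeas hindep hdist (fun i => 2*(i:ℤ)+1)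
      (by intro i j hij; refine ⟨?_, ?_, ?_, ?_⟩ <;> omega)
  have hg3 : ∀ᵐ ω ∂P, Tendsto (fun n : ℕ =>
      (n:ℝ)⁻¹ * ∑ i ∈ Finset.range n, ε (-(2*(i:ℤ))-1) ω * ε (-(2*(i:ℤ))-1 + 1) ω) atTop (nhds 0) :=
    dms_slln P ε hmeas hindep hdist (fun i => -(2*(i:ℤ))-1)
      (by intro i j hij; refine ⟨?_, ?_, ?_, ?_⟩ <;> omega)
  have hg4 : ∀ᵐ ω ∂P, Tendsto (fun n : ℕ =>
      (n:ℝ)⁻¹ * ∑ i ∈ Finset.range n, ε (-(2*(i:ℤ))-2) ω * ε (-(2*(i:ℤ))-2 + 1) ω) atTop (nhds 0) :=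
    dms_slln P ε hmeas hindep hdist (fun i => -(2*(i:ℤ))-2)
      (by intro i j hij; refine ⟨?_, ?_, ?_, ?_⟩ <;> omega)
  filter_upwards [hpm, hg1, hg2, hg3, hg4] with ω hωpm h1 h2 h3 h4
  have hdec := dms_sum_decomp ε w hw_even hw_odd ω hωpm
  have hcp1 : Tendsto (fun N : ℕ => (N+3)/4) atTop atTop :=
    Filter.tendsto_atTop_atTop.2 fun b => ⟨4*b, fun N hN => by omega⟩
  have hcq1 : Tendsto (fun N : ℕ => (N+1)/4) atTop atTop :=
    Filter.tendsto_atTop_atTop.2 fun b => ⟨4*b, fun N hN => by omega⟩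
  have hcp2 : ∀ N : ℕ, 2 * ((N+3)/4) ≤ 2*N+1 := fun N => by omega
  have hcq2 : ∀ N : ℕ, 2 * ((N+1)/4) ≤ 2*N+1 := fun N => by omega
  have hv1 := dms_vanish _ h1 (fun N => (N+3)/4) hcp1 hcp2
  have hv3 := dms_vanish _ h3 (fun N => (N+3)/4) hcp1 hcp2
  have hv2 := dms_vanish _ h2 (fun N => (N+1)/4) hcq1 hcq2
  have hv4 := dms_vanish _ h4 (fun N => (N+1)/4) hcq1 hcq2
  have htot := (((dms_det_tendsto.add hv1).add hv3).add hv2).add hv4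
  rw [show (-1:ℝ) + 0 + 0 + 0 + 0 = -1 by norm_num] at htot
  refine htot.congr fun N => ?_
  rw [hdec N]
  ring
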